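/- Let G be a graph and v a vertex of G. If G is isomorphic to C_4, then there exists a function f : V(G) → [5]² such that every vertex of G other than v is satisfied and |⋃_{u ∈ N[v]} f(u)| ≥ 3. If G is isomorphic to C_7, C_4·C_4 or K_{2,3}, then there exists a function f : V(G) → [5]² such that every vertex of G other than v is satisfied and |⋃_{u ∈ N[v]} f(u)| ≥ 4. -/

import Mathlib

open SimpleGraph

/-- The graph `C₄·C₄`: two 4-cycles sharing exactly one vertex (the vertex `0`). -/
def C4C4 : SimpleGraph (Fin 7) :=
  SimpleGraph.fromEdgeSet {s(0,1), s(1,2), s(2,3), s(3,0), s(0,4), s(4,5), s(5,6), s(6,0)}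

/-- The set of colors seen by the closed neighborhood of `v` under `f`. -/
def closedNbhdColors {V : Type*} (G : SimpleGraph V) (f : V → Finset (Fin 5)) (v : V) :
    Set (Fin 5) :=
  (↑(f v) : Set (Fin 5)) ∪ ⋃ u ∈ G.neighborSet v, (↑(f u) : Set (Fin 5))

instance : DecidableRel C4C4.Adj := fun a b =>
  decidable_of_iff ((s(a,b) = s(0,1) ∨ s(a,b) = s(1,2) ∨ s(a,b) = s(2,3) ∨ s(a,b) = s(3,0) ∨
    s(a,b) = s(0,4) ∨ s(a,b) = s(4,5) ∨ s(a,b) = s(5,6) ∨ s(a,b) = s(6,0)) ∧ a ≠ b)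
    (by simp [C4C4, Set.mem_insert_iff])

instance : DecidableRel (completeBipartiteGraph (Fin 2) (Fin 3)).Adj := fun a b =>
  inferInstanceAs (Decidable (_ ∨ _))

lemma ncard_closedNbhdColors {W : Type*} [Fintype W] [DecidableEq W] (H : SimpleGraph W)
    [DecidableRel H.Adj] (g : W → Finset (Fin 5)) (t : W) :
    (closedNbhdColors H g t).ncard =
      (Finset.univ.filter (fun c => c ∈ g t ∨ ∃ u, H.Adj t u ∧ c ∈ g u)).card := by
  have h : closedNbhdColors H g t =
      ↑(Finset.univ.filter (fun c => c ∈ g t ∨ ∃ u, H.Adj t u ∧ c ∈ g u)) := by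
    ext c
    simp [closedNbhdColors, mem_neighborSet]
  rw [h, Set.ncard_coe_finset]

lemma transfer {V W : Type*} (G : SimpleGraph V) (H : SimpleGraph W) (e : G ≃g H) (v : V)
    (g : W → Finset (Fin 5)) (k : ℕ)
    (h1 : ∀ u, (g u).card = 2)
    (h2 : ∀ u, u ≠ e v → ∀ c : Fin 5, ∃ w, (w = u ∨ H.Adj w u) ∧ c ∈ g w)
    (h3 : k ≤ (closedNbhdColors H g (e v)).ncard) :
    ∃ f : V → Finset (Fin 5), (∀ u, (f u).card = 2) ∧
      (∀ u, u ≠ v → ∀ c : Fin 5, ∃ w, (w = u ∨ G.Adj w u) ∧ c ∈ f w) ∧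
      k ≤ (closedNbhdColors G f v).ncard := by
  refine ⟨fun x => g (e x), fun u => h1 _, ?_, ?_⟩
  · intro u hu c
    obtain ⟨w, hw, hc⟩ := h2 (e u) (fun h => hu (e.injective h)) c
    refine ⟨e.symm w, ?_, by simpa using hc⟩
    rcases hw with h | h
    · left; rw [h]; exact e.symm_apply_apply u
    · right
      have := e.symm.map_adj_iff.mpr h
      simpa using this
  · have heq : closedNbhdColors G (fun x => g (e x)) v = closedNbhdColors H g (e v) := by
      ext c
      simp only [closedNbhdColors, Set.mem_union, Set.mem_iUnion, mem_neighborSet,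
        Finset.mem_coe, exists_prop]
      constructor
      · rintro (h | ⟨u, hu, hc⟩)
        · exact Or.inl h
        · exact Or.inr ⟨e u, e.map_adj_iff.mpr hu, hc⟩
      · rintro (h | ⟨w, hw, hc⟩)
        · exact Or.inl h
        · refine Or.inr ⟨e.symm w, ?_, by simpa using hc⟩
          have := e.symm.map_adj_iff.mpr hw
          simpa using this
    rw [heq]; exact h3

/- explicit colorings -/
def p : Fin 5 → Fin 5 → Finset (Fin 5) := fun a b => {a, b}

def gC4 : Fin 4 → Fin 4 → Finset (Fin 5)
  | 0 => ![p 0 1, p 0 2, p 3 4, p 1 2]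
  | 1 => ![p 0 1, p 0 2, p 1 2, p 3 4]
  | 2 => ![p 0 1, p 2 3, p 2 4, p 3 4]
  | 3 => ![p 0 1, p 2 3, p 0 4, p 1 4]

def gC7 : Fin 7 → Fin 7 → Finset (Fin 5)
  | 0 => ![p 0 1, p 0 2, p 3 4, p 1 2, p 0 1, p 3 4, p 2 3]
  | 1 => ![p 0 1, p 0 2, p 1 3, p 2 4, p 0 1, p 2 3, p 3 4]
  | 2 => ![p 0 1, p 0 2, p 3 4, p 2 3, p 0 1, p 2 4, p 3 4]
  | 3 => ![p 0 1, p 0 2, p 3 4, p 1 3, p 0 1, p 2 4, p 3 4]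
  | 4 => ![p 0 1, p 0 2, p 3 4, p 1 2, p 0 1, p 2 3, p 3 4]
  | 5 => ![p 0 1, p 0 2, p 3 4, p 1 2, p 0 3, p 2 4, p 3 4]
  | 6 => ![p 0 1, p 0 2, p 3 4, p 1 3, p 0 2, p 1 4, p 3 4]

def gCC : Fin 7 → Fin 7 → Finset (Fin 5)
  | 0 => ![p 0 1, p 0 2, p 3 4, p 1 2, p 0 3, p 2 4, p 1 3]
  | 1 => ![p 0 1, p 0 1, p 2 3, p 2 4, p 0 3, p 2 4, p 1 3]
  | 2 => ![p 0 1, p 0 2, p 3 4, p 2 3, p 0 4, p 2 3, p 1 4]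
  | 3 => ![p 0 1, p 0 2, p 3 4, p 1 3, p 0 4, p 2 3, p 1 4]
  | 4 => ![p 0 1, p 0 2, p 3 4, p 1 2, p 0 1, p 2 3, p 3 4]
  | 5 => ![p 0 1, p 0 2, p 3 4, p 1 2, p 0 3, p 2 4, p 3 4]
  | 6 => ![p 0 1, p 0 2, p 3 4, p 1 2, p 0 3, p 2 4, p 1 4]

def row (a b c d e : Finset (Fin 5)) : Fin 2 ⊕ Fin 3 → Finset (Fin 5)
  | .inl 0 => a
  | .inl 1 => b
  | .inr 0 => c
  | .inr 1 => d
  | .inr 2 => e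

def gK : Fin 2 ⊕ Fin 3 → Fin 2 ⊕ Fin 3 → Finset (Fin 5)
  | .inl 0 => row (p 0 1) (p 2 3) (p 0 4) (p 1 4) (p 2 4)
  | .inl 1 => row (p 0 1) (p 2 3) (p 0 4) (p 2 4) (p 3 4)
  | .inr 0 => row (p 0 1) (p 2 3) (p 0 1) (p 2 4) (p 3 4)
  | .inr 1 => row (p 0 1) (p 2 3) (p 0 4) (p 1 2) (p 3 4)
  | .inr 2 => row (p 0 1) (p 2 3) (p 0 4) (p 1 4) (p 2 3)

theorem stmt15 {V : Type*} (G : SimpleGraph V) (v : V) :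
    (Nonempty (G ≃g cycleGraph 4) →
      ∃ f : V → Finset (Fin 5), (∀ u, (f u).card = 2) ∧
        (∀ u, u ≠ v → ∀ c : Fin 5, ∃ w, (w = u ∨ G.Adj w u) ∧ c ∈ f w) ∧
        3 ≤ (closedNbhdColors G f v).ncard) ∧
    ((Nonempty (G ≃g cycleGraph 7) ∨ Nonempty (G ≃g C4C4) ∨
        Nonempty (G ≃g completeBipartiteGraph (Fin 2) (Fin 3))) →
      ∃ f : V → Finset (Fin 5), (∀ u, (f u).card = 2) ∧
        (∀ u, u ≠ v → ∀ c : Fin 5, ∃ w, (w = u ∨ G.Adj w u) ∧ c ∈ f w) ∧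
        4 ≤ (closedNbhdColors G f v).ncard) := by
  constructor
  · rintro ⟨e⟩
    refine transfer G _ e v (gC4 (e v)) 3 ?_ ?_ ?_
    · exact (by decide : ∀ t u : Fin 4, ((gC4 t) u).card = 2) (e v)
    · exact (by decide : ∀ t : Fin 4, ∀ u, u ≠ t → ∀ c : Fin 5,
        ∃ w, (w = u ∨ (cycleGraph 4).Adj w u) ∧ c ∈ gC4 t w) (e v)
    · rw [ncard_closedNbhdColors]
      convert (by decide : ∀ t : Fin 4, 3 ≤ (Finset.univ.filter
        (fun c => c ∈ gC4 t t ∨ ∃ u, (cycleGraph 4).Adj t u ∧ c ∈ gC4 t u)).card) (e v)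
  · intro h
    obtain h | h | h := h
    · obtain ⟨e⟩ := h
      refine transfer G _ e v (gC7 (e v)) 4 ?_ ?_ ?_
      · exact (by decide : ∀ t u : Fin 7, ((gC7 t) u).card = 2) (e v)
      · exact (by decide : ∀ t : Fin 7, ∀ u, u ≠ t → ∀ c : Fin 5,
          ∃ w, (w = u ∨ (cycleGraph 7).Adj w u) ∧ c ∈ gC7 t w) (e v)
      · rw [ncard_closedNbhdColors]
        convert (by decide : ∀ t : Fin 7, 4 ≤ (Finset.univ.filter
          (fun c => c ∈ gC7 t t ∨ ∃ u, (cycleGraph 7).Adj t u ∧ c ∈ gC7 t u)).card) (e v)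
    · obtain ⟨e⟩ := h
      refine transfer G _ e v (gCC (e v)) 4 ?_ ?_ ?_
      · exact (by decide : ∀ t u : Fin 7, ((gCC t) u).card = 2) (e v)
      · exact (by decide : ∀ t : Fin 7, ∀ u, u ≠ t → ∀ c : Fin 5,
          ∃ w, (w = u ∨ C4C4.Adj w u) ∧ c ∈ gCC t w) (e v)
      · rw [ncard_closedNbhdColors]
        convert (by decide : ∀ t : Fin 7, 4 ≤ (Finset.univ.filter
          (fun c => c ∈ gCC t t ∨ ∃ u, C4C4.Adj t u ∧ c ∈ gCC t u)).card) (e v)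
    · obtain ⟨e⟩ := h
      refine transfer G _ e v (gK (e v)) 4 ?_ ?_ ?_
      · exact (by decide : ∀ t u : Fin 2 ⊕ Fin 3, ((gK t) u).card = 2) (e v)
      · exact (by decide : ∀ t : Fin 2 ⊕ Fin 3, ∀ u, u ≠ t → ∀ c : Fin 5,
          ∃ w, (w = u ∨ (completeBipartiteGraph (Fin 2) (Fin 3)).Adj w u) ∧ c ∈ gK t w) (e v)
      · rw [ncard_closedNbhdColors]
        exact (by decide : ∀ t : Fin 2 ⊕ Fin 3, 4 ≤ (Finset.univ.filter
          (fun c => c ∈ gK t t ∨ ∃ u, (completeBipartiteGraph (Fin 2) (Fin 3)).Adj t u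
            ∧ c ∈ gK t u)).card) (e v)
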